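/- Let 0 < α ≤ 1, let à ∈ ℝ^{n×n} be symmetric, X ∈ ℝ^{n×d}, and define g(F) = ‖F − X‖²_F + (1/α − 1) tr(Fᵀ(I − Ã)F). Then g is differentiable with ∇g(F) = 2(F − X) + 2(1/α − 1)(I − Ã)F (gradient with respect to the Frobenius inner product), and one gradient descent step with step size α/2 from any F ∈ ℝ^{n×d} yields the APPNP update: F − (α/2)∇g(F) = (1−α)ÃF + αX. -/

import Mathlib

open Matrix

section Aux

variable {n d : ℕ}

/-- coordinate projection as a continuous linear map -/
noncomputable def Pr (i : Fin n) (j : Fin d) : (Fin n → Fin d → ℝ) →L[ℝ] ℝ :=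
  (ContinuousLinearMap.proj j : (Fin d → ℝ) →L[ℝ] ℝ).comp
    (ContinuousLinearMap.proj i : (Fin n → Fin d → ℝ) →L[ℝ] (Fin d → ℝ))

lemma Pr_apply (i : Fin n) (j : Fin d) (F : Fin n → Fin d → ℝ) : Pr i j F = F i j := rfl

lemma hasFDerivAt_Pr (i : Fin n) (j : Fin d) (F : Fin n → Fin d → ℝ) :
    HasFDerivAt (fun G : Fin n → Fin d → ℝ => G i j) (Pr i j) F :=
  (Pr i j).hasFDerivAt

lemma trace_as_sum (M : Matrix (Fin n) (Fin n) ℝ) (F : Fin n → Fin d → ℝ) :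
    Matrix.trace ((Matrix.of F)ᵀ * M * Matrix.of F)
      = ∑ x : Fin d, ∑ k : Fin n, ∑ i : Fin n, M i k * (F i x * F k x) := by
  simp only [Matrix.trace, Matrix.diag, Matrix.mul_apply, Matrix.transpose_apply,
    Matrix.of_apply, Finset.sum_mul]
  refine Finset.sum_congr rfl fun x _ => ?_
  refine Finset.sum_congr rfl fun k _ => ?_
  refine Finset.sum_congr rfl fun i _ => ?_
  ring

end Aux

/-- APPNP update as a gradient descent step: for `0 < α ≤ 1`, `Ã` symmetric, and
`g(F) = ‖F − X‖²_F + (1/α − 1)tr(Fᵀ(I − Ã)F)`, `g` is differentiable with gradient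
`∇g(F) = 2(F − X) + 2(1/α − 1)(I − Ã)F` (w.r.t. the Frobenius inner product), and one
gradient descent step with step size `α/2` yields `F − (α/2)∇g(F) = (1−α)ÃF + αX`. -/
theorem appnp_aggregation_as_gradient_step (n d : ℕ) (α : ℝ) (hα1 : 0 < α) (hα2 : α ≤ 1)
    (Atil : Matrix (Fin n) (Fin n) ℝ) (hsym : Atil.IsSymm) (X : Fin n → Fin d → ℝ) :
    let g : (Fin n → Fin d → ℝ) → ℝ := fun F =>
      (∑ i, ∑ j, (F i j - X i j) ^ 2)
        + (1 / α - 1) * Matrix.trace ((Matrix.of F)ᵀ * (1 - Atil) * Matrix.of F)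
    let grad : (Fin n → Fin d → ℝ) → Fin n → Fin d → ℝ := fun F i j =>
      2 * (F i j - X i j)
        + 2 * (1 / α - 1) * (((1 - Atil) * Matrix.of F : Matrix (Fin n) (Fin d) ℝ) i j)
    Differentiable ℝ g ∧
    (∀ (F H : Fin n → Fin d → ℝ),
      fderiv ℝ g F H = ∑ i, ∑ j, grad F i j * H i j) ∧
    (∀ (F : Fin n → Fin d → ℝ) (i : Fin n) (j : Fin d),
      F i j - α / 2 * grad F i j
        = (1 - α) * ((Atil * Matrix.of F : Matrix (Fin n) (Fin d) ℝ) i j) + α * X i j) := by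
  intro g grad
  set c : ℝ := 1 / α - 1 with hc
  set M : Matrix (Fin n) (Fin n) ℝ := 1 - Atil with hMdef
  have hM : ∀ i k, M i k = M k i := by
    intro i k
    have h := Matrix.IsSymm.apply hsym i k
    simp [hMdef, Matrix.sub_apply, Matrix.one_apply, h, eq_comm]
  -- the derivative (raw form coming from the combinators)
  have hL : ∀ F : Fin n → Fin d → ℝ,
      HasFDerivAt g
        ((∑ i, ∑ j, ((F i j - X i j) • Pr i j + (F i j - X i j) • Pr i j))
          + c • (∑ x : Fin d, ∑ k : Fin n, ∑ i : Fin n,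
              M i k • (F i x • Pr k x + F k x • Pr i x))) F := by
    intro F
    have h1 : HasFDerivAt (fun G : Fin n → Fin d → ℝ => ∑ i, ∑ j, (G i j - X i j) ^ 2)
        (∑ i, ∑ j, ((F i j - X i j) • Pr i j + (F i j - X i j) • Pr i j)) F := by
      have : ∀ (i : Fin n) (j : Fin d),
          HasFDerivAt (fun G : Fin n → Fin d → ℝ => (G i j - X i j) ^ 2)
            ((F i j - X i j) • Pr i j + (F i j - X i j) • Pr i j) F := by
        intro i j
        have h := ((hasFDerivAt_Pr i j F).sub_const (X i j)).fun_mul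
          ((hasFDerivAt_Pr i j F).sub_const (X i j))
        simpa [pow_two] using h
      exact HasFDerivAt.fun_sum fun i _ => HasFDerivAt.fun_sum fun j _ => this i j
    have h2 : HasFDerivAt
        (fun G : Fin n → Fin d → ℝ =>
          c * Matrix.trace ((Matrix.of G)ᵀ * M * Matrix.of G))
        (c • (∑ x : Fin d, ∑ k : Fin n, ∑ i : Fin n,
            M i k • (F i x • Pr k x + F k x • Pr i x))) F := by
      have h2' : HasFDerivAt
          (fun G : Fin n → Fin d → ℝ =>
            ∑ x : Fin d, ∑ k : Fin n, ∑ i : Fin n, M i k * (G i x * G k x))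
          (∑ x : Fin d, ∑ k : Fin n, ∑ i : Fin n,
            M i k • (F i x • Pr k x + F k x • Pr i x)) F := by
        refine HasFDerivAt.fun_sum fun x _ => HasFDerivAt.fun_sum fun k _ =>
          HasFDerivAt.fun_sum fun i _ => ?_
        exact ((hasFDerivAt_Pr i x F).fun_mul (hasFDerivAt_Pr k x F)).const_mul (M i k)
      have := h2'.const_mul c
      refine this.congr_of_eventuallyEq ?_
      filter_upwards with G
      rw [trace_as_sum]
    exact h1.add h2
  refine ⟨fun F => (hL F).differentiableAt, fun F H => ?_, fun F i j => ?_⟩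
  · rw [(hL F).fderiv]
    simp only [ContinuousLinearMap.add_apply, ContinuousLinearMap.coe_sum',
      Finset.sum_apply, ContinuousLinearMap.coe_smul', Pi.smul_apply,
      ContinuousLinearMap.smul_apply, ContinuousLinearMap.add_apply, Pr_apply,
      smul_eq_mul]
    -- goal: raw-sum form = grad form
    have key : ∑ x : Fin d, ∑ k : Fin n, ∑ i : Fin n,
          M i k * (F i x * H k x + F k x * H i x)
        = ∑ i, ∑ x : Fin d, 2 * ((M * Matrix.of F) i x) * H i x := by
      have hsplit : ∀ (x : Fin d) (k i : Fin n),
          M i k * (F i x * H k x + F k x * H i x)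
            = M i k * F i x * H k x + M i k * F k x * H i x := by
        intro x k i; ring
      calc ∑ x : Fin d, ∑ k : Fin n, ∑ i : Fin n,
            M i k * (F i x * H k x + F k x * H i x)
          = (∑ x : Fin d, ∑ k : Fin n, ∑ i : Fin n, M i k * F i x * H k x)
            + ∑ x : Fin d, ∑ k : Fin n, ∑ i : Fin n, M i k * F k x * H i x := by
            simp only [hsplit, Finset.sum_add_distrib]
        _ = (∑ x : Fin d, ∑ i : Fin n, ∑ k : Fin n, M i k * F k x * H i x)
            + ∑ x : Fin d, ∑ i : Fin n, ∑ k : Fin n, M i k * F k x * H i x := by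
            congr 1
            · refine Finset.sum_congr rfl fun x _ => Finset.sum_congr rfl fun i _ =>
                Finset.sum_congr rfl fun k _ => ?_
              rw [hM k i]
            · exact Finset.sum_congr rfl fun x _ => Finset.sum_comm
        _ = ∑ x : Fin d, ∑ i : Fin n, 2 * ((M * Matrix.of F) i x) * H i x := by
            rw [← Finset.sum_add_distrib]
            refine Finset.sum_congr rfl fun x _ => ?_
            rw [← Finset.sum_add_distrib]
            refine Finset.sum_congr rfl fun i _ => ?_
            simp only [Matrix.mul_apply, Matrix.of_apply, Finset.sum_mul]
            rw [Finset.mul_sum, Finset.sum_mul, ← Finset.sum_add_distrib]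
            refine Finset.sum_congr rfl fun k _ => ?_
            ring
        _ = ∑ i, ∑ x : Fin d, 2 * ((M * Matrix.of F) i x) * H i x := Finset.sum_comm
    show (∑ i, ∑ j, ((F i j - X i j) * H i j + (F i j - X i j) * H i j))
        + c * ∑ x : Fin d, ∑ k : Fin n, ∑ i : Fin n,
            M i k * (F i x * H k x + F k x * H i x)
      = ∑ i, ∑ j, (2 * (F i j - X i j) + 2 * c * ((M * Matrix.of F) i j)) * H i j
    rw [key, Finset.mul_sum, ← Finset.sum_add_distrib]
    refine Finset.sum_congr rfl fun i _ => ?_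
    rw [Finset.mul_sum, ← Finset.sum_add_distrib]
    refine Finset.sum_congr rfl fun j _ => ?_
    ring
  · show F i j - α / 2 * (2 * (F i j - X i j) + 2 * c * ((M * Matrix.of F) i j))
      = (1 - α) * ((Atil * Matrix.of F) i j) + α * X i j
    have hMF : (M * Matrix.of F) i j = F i j - (Atil * Matrix.of F) i j := by
      simp [hMdef, Matrix.sub_mul, Matrix.sub_apply, Matrix.one_mul]
    rw [hMF, hc]
    have hα : α ≠ 0 := ne_of_gt hα1
    field_simp
    ring
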